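/- Let p be an odd prime, q = p^n, χ a primitive Dirichlet character modulo q, and q̃ = p^s a divisor of q with 1 ≤ s < n. Let j, h be integers with p-adic valuations η_j = min(ord_p j, s), η_h = min(ord_p h, s) satisfying η_j + η_h = 2s − 1 (in particular η_j ≠ η_h). Then K_χ(j, h; q̃) = −q̃^{1/2}/p, where K_χ(j,h;q̃) = q̃^{-1/2}∑*_{r mod q̃} χ(r + h(q/q̃))χ̄(r)e(jr/q̃). -/

import Mathlib

open Finset

/-- The complete exponential sum K_χ(a,b;p^s) of (3.8):
K_χ(a,b;q̃) = q̃^{-1/2} ∑*_{r mod q̃} χ(r + b·(q/q̃)) χ̄(r) e(ar/q̃), where q = p^n. -/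
noncomputable def Kchi (p n : ℕ) (χ : DirichletCharacter ℂ (p ^ n)) (a b : ℤ) (s : ℕ) : ℂ :=
  ((Real.sqrt (p ^ s) : ℂ))⁻¹ *
    ∑ r ∈ Finset.range (p ^ s),
      if Nat.Coprime r p then
        χ ((r : ZMod (p ^ n)) + (b : ZMod (p ^ n)) * (p : ZMod (p ^ n)) ^ (n - s)) *
          (starRingEnd ℂ) (χ (r : ZMod (p ^ n))) *
          Complex.exp (2 * Real.pi * Complex.I * (a : ℂ) * (r : ℂ) / ((p : ℂ) ^ s))
      else 0


lemma exp_sum_zero (p : ℕ) (hp : p.Prime) (j' : ℤ) (hj' : ¬ ((p:ℤ) ∣ j')) :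
    ∑ u ∈ Finset.range p, Complex.exp (2 * Real.pi * Complex.I * (j':ℂ) * (u:ℂ) / (p:ℂ)) = 0 := by
  have hp0 : (p:ℂ) ≠ 0 := Nat.cast_ne_zero.mpr hp.pos.ne'
  set z : ℂ := Complex.exp (2 * Real.pi * Complex.I * (j':ℂ) / (p:ℂ)) with hz
  have hterm : ∀ u : ℕ, Complex.exp (2 * Real.pi * Complex.I * (j':ℂ) * (u:ℂ) / (p:ℂ)) = z ^ u := by
    intro u
    rw [hz, ← Complex.exp_nat_mul]
    congr 1
    ring
  have hz1 : z ≠ 1 := by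
    intro hzz
    rw [hz, Complex.exp_eq_one_iff] at hzz
    obtain ⟨k, hk⟩ := hzz
    apply hj'
    refine ⟨k, ?_⟩
    have h2 : (2 * (Real.pi:ℂ) * Complex.I : ℂ) ≠ 0 := by
      simp [Real.pi_ne_zero, Complex.I_ne_zero]
    have hk' : 2 * (Real.pi:ℂ) * Complex.I * (j':ℂ) = (k:ℂ) * (2 * Real.pi * Complex.I) * p :=
      (div_eq_iff hp0).mp hk
    have hk'' : 2 * (Real.pi:ℂ) * Complex.I * (j':ℂ) = 2 * (Real.pi:ℂ) * Complex.I * ((p:ℂ) * k) := by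
      linear_combination hk'
    have : (j' : ℂ) = (p:ℂ) * k := mul_left_cancel₀ h2 hk''
    exact_mod_cast this
  have hzp : z ^ p = 1 := by
    rw [hz, ← Complex.exp_nat_mul]
    have : (p:ℂ) * (2 * Real.pi * Complex.I * (j':ℂ) / (p:ℂ)) = (j':ℂ) * (2 * Real.pi * Complex.I) := by
      field_simp
    rw [this]
    exact Complex.exp_int_mul_two_pi_mul_I j'
  calc ∑ u ∈ Finset.range p, Complex.exp (2 * Real.pi * Complex.I * (j':ℂ) * (u:ℂ) / (p:ℂ))
      = ∑ u ∈ Finset.range p, z ^ u := by simp_rw [hterm]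
    _ = (z ^ p - 1) / (z - 1) := geom_sum_eq hz1 p
    _ = 0 := by rw [hzp]; simp

lemma periodic_sum (f : ℕ → ℂ) (p : ℕ) (hf : ∀ r, f (r + p) = f r) (m : ℕ) :
    ∑ r ∈ Finset.range (m * p), f r = (m : ℂ) * ∑ u ∈ Finset.range p, f u := by
  induction m with
  | zero => simp
  | succ m ih =>
    have hsplit : ∑ r ∈ Finset.range (m * p + p), f r
        = ∑ r ∈ Finset.range (m * p), f r + ∑ i ∈ Finset.range p, f (m * p + i) := by
      rw [Finset.sum_range_add]
    have hshift : ∀ k i : ℕ, f (k * p + i) = f i := by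
      intro k
      induction k with
      | zero => simp
      | succ k ihk =>
        intro i
        have : (k+1) * p + i = (k * p + i) + p := by ring
        rw [this, hf, ihk]
    rw [Nat.succ_mul, hsplit, ih]
    simp_rw [hshift]
    push_cast
    ring

lemma sum_range_zmod (p : ℕ) [NeZero p] (f : ℕ → ℂ) :
    ∑ u ∈ Finset.range p, f u = ∑ v : ZMod p, f v.val := by
  refine Finset.sum_nbij' (fun u => (u : ZMod p)) (fun v => v.val) ?_ ?_ ?_ ?_ ?_
  · intro a _; exact Finset.mem_univ _
  · intro v _; exact Finset.mem_range.mpr (ZMod.val_lt v)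
  · intro a ha; exact ZMod.val_cast_of_lt (Finset.mem_range.mp ha)
  · intro v _; exact ZMod.natCast_val v |>.trans (ZMod.cast_id _ _)
  · intro a ha; rw [ZMod.val_cast_of_lt (Finset.mem_range.mp ha)]

-- p^{n-1} * x only depends on x mod p
lemma pmul_congr (p n : ℕ) (hn : 1 ≤ n) {x y : ℤ} (hxy : (p:ℤ) ∣ (x - y)) :
    ((p:ZMod (p^n)))^(n-1) * (x : ZMod (p^n)) = (p:ZMod (p^n))^(n-1) * (y : ZMod (p^n)) := by
  obtain ⟨k, hk⟩ := hxy
  have hx : (x : ZMod (p^n)) = (y : ZMod (p^n)) + (p:ZMod (p^n)) * (k : ZMod (p^n)) := by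
    have : x = y + p * k := by linarith
    rw [this]; push_cast; ring
  have hp0 : ((p:ZMod (p^n)))^n = 0 := by
    have : ((p^n : ℕ) : ZMod (p^n)) = 0 := ZMod.natCast_self _
    push_cast at this; exact this
  have hpn : ((p:ZMod (p^n)))^(n-1) * (p:ZMod (p^n)) = 0 := by
    rw [← pow_succ]
    have : n - 1 + 1 = n := by omega
    rw [this, hp0]
  rw [hx]
  linear_combination (k : ZMod (p^n)) * hpn

lemma psi_mul (p n : ℕ) (hn : 2 ≤ n) (a b : ZMod (p^n)) :
    (1 + (p:ZMod (p^n))^(n-1) * a) * (1 + (p:ZMod (p^n))^(n-1) * b)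
      = 1 + (p:ZMod (p^n))^(n-1) * (a + b) := by
  have hc : ((p:ZMod (p^n))^(n-1)) * ((p:ZMod (p^n))^(n-1)) = 0 := by
    rw [← pow_add]
    have h1 : (n-1) + (n-1) = n + (n - 2) := by omega
    rw [h1, pow_add]
    have hp0 : ((p:ZMod (p^n)))^n = 0 := by
      have : ((p^n : ℕ) : ZMod (p^n)) = 0 := ZMod.natCast_self _
      push_cast at this; exact this
    rw [hp0, zero_mul]
  linear_combination (a*b) * hc

lemma exists_ne_one (p n : ℕ) (hp : p.Prime) (hn : 2 ≤ n)
    (χ : DirichletCharacter ℂ (p^n)) (hχ : χ.IsPrimitive) :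
    ∃ x : ZMod (p^n), χ (1 + (p:ZMod (p^n))^(n-1) * x) ≠ 1 := by
  by_contra hcon
  push_neg at hcon
  have hpn : NeZero (p^n) := ⟨pow_ne_zero _ hp.pos.ne'⟩
  have hd : p^(n-1) ∣ p^n := pow_dvd_pow p (by omega)
  have hFT : χ.FactorsThrough (p^(n-1)) := by
    rw [DirichletCharacter.factorsThrough_iff_ker_unitsMap hd]
    intro u hu
    rw [MonoidHom.mem_ker] at hu ⊢
    have hcast : ZMod.castHom hd (ZMod (p^(n-1))) ((u : (ZMod (p^n))ˣ) : ZMod (p^n)) = 1 := by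
      have := congrArg (Units.val) hu
      simpa [ZMod.unitsMap_def] using this
    -- (u : ZMod p^n) = 1 + p^{n-1} * t
    set a : ZMod (p^n) := ((u : (ZMod (p^n))ˣ) : ZMod (p^n)) - 1 with ha
    have haval : ((a.val : ℕ) : ZMod (p^(n-1))) = 0 := by
      have h1 : ZMod.castHom hd (ZMod (p^(n-1))) a = 0 := by
        rw [ha, map_sub, hcast, map_one, sub_self]
      rw [← h1, ZMod.castHom_apply, ← ZMod.natCast_val]
    have hdvd : p^(n-1) ∣ a.val := by
      rwa [ZMod.natCast_eq_zero_iff] at haval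
    obtain ⟨t, ht⟩ := hdvd
    have hu1 : ((u : (ZMod (p^n))ˣ) : ZMod (p^n)) = 1 + (p:ZMod (p^n))^(n-1) * (t : ZMod (p^n)) := by
      have h2 : ((a.val : ℕ) : ZMod (p^n)) = a := by
        rw [ZMod.natCast_val, ZMod.cast_id]
      have : a = (p:ZMod (p^n))^(n-1) * (t : ZMod (p^n)) := by
        rw [← h2, ht]; push_cast; ring
      rw [ha] at this
      linear_combination this
    have : χ ((u : (ZMod (p^n))ˣ) : ZMod (p^n)) = 1 := by rw [hu1]; exact hcon _
    ext
    rw [MulChar.coe_toUnitHom]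
    simpa using this
  have hle : χ.conductor ≤ p^(n-1) := Nat.sInf_le hFT
  rw [hχ] at hle
  have : p^n < p^n := lt_of_le_of_lt hle (by
    exact Nat.pow_lt_pow_right hp.one_lt (by omega))
  exact lt_irrefl _ this

lemma psi_add (p n : ℕ) (hp : p.Prime) (hn : 2 ≤ n) (χ : DirichletCharacter ℂ (p^n))
    (v w : ZMod p) [NeZero p] :
    χ (1 + (p:ZMod (p^n))^(n-1) * ((v + w).val : ZMod (p^n)))
      = χ (1 + (p:ZMod (p^n))^(n-1) * (v.val : ZMod (p^n)))
        * χ (1 + (p:ZMod (p^n))^(n-1) * (w.val : ZMod (p^n))) := by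
  rw [← map_mul, psi_mul p n hn]
  congr 2
  have h1 : ((v.val : ZMod (p^n)) + (w.val : ZMod (p^n))) = (((v.val + w.val : ℕ)) : ZMod (p^n)) := by
    push_cast; ring
  rw [h1]
  have := pmul_congr p n (by omega) (x := ((v+w).val : ℤ)) (y := ((v.val + w.val : ℕ) : ℤ))
    (by
      have hmod : (v+w).val ≡ v.val + w.val [MOD p] := by
        rw [ZMod.val_add]
        exact (Nat.mod_modEq _ _)
      exact Int.ModEq.dvd (Int.ModEq.symm (Int.natCast_modEq_iff.mpr hmod)))
  push_cast at this
  rw [this, h1]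

lemma sum_psi (p n : ℕ) (hp : p.Prime) (hn : 2 ≤ n)
    (χ : DirichletCharacter ℂ (p^n)) (hχ : χ.IsPrimitive) [NeZero p] :
    ∑ v : ZMod p, χ (1 + (p:ZMod (p^n))^(n-1) * (v.val : ZMod (p^n))) = 0 := by
  set ψ : ZMod p → ℂ := fun v => χ (1 + (p:ZMod (p^n))^(n-1) * (v.val : ZMod (p^n))) with hψ
  obtain ⟨x, hx⟩ := exists_ne_one p n hp hn χ hχ
  have hx2 : ψ ((x.val : ZMod p)) ≠ 1 := by
    rw [hψ]
    simp only
    have heq := pmul_congr p n (by omega) (x := (x.val : ℤ))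
      (y := (((x.val : ZMod p).val : ℕ) : ℤ))
      (by
        have hmod : x.val ≡ (x.val : ZMod p).val [MOD p] := by
          rw [ZMod.val_natCast]
          exact (Nat.mod_modEq _ _).symm
        exact Int.ModEq.dvd (Int.natCast_modEq_iff.mpr hmod.symm))
    push_cast at heq
    rw [← heq]
    have hxx : ((x.val : ℕ) : ZMod (p^n)) = x := by rw [ZMod.natCast_val, ZMod.cast_id]
    rw [hxx]
    exact hx
  set v₀ := (x.val : ZMod p)
  have hshift : ∑ v : ZMod p, ψ v = ψ v₀ * ∑ v : ZMod p, ψ v := by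
    rw [Finset.mul_sum]
    rw [← Equiv.sum_comp (Equiv.addRight v₀) ψ]
    apply Finset.sum_congr rfl
    intro v _
    simp only [Equiv.coe_addRight]
    rw [hψ]
    simp only
    rw [add_comm v v₀, psi_add p n hp hn χ v₀ v]
  have : (ψ v₀ - 1) * ∑ v : ZMod p, ψ v = 0 := by linear_combination -hshift
  rcases mul_eq_zero.mp this with h | h
  · exact absurd (by linear_combination h) hx2
  · exact h

lemma pmul_congr' (p n : ℕ) (hn : 1 ≤ n) (hd : p ∣ p^n) [NeZero (p^n)] {z w : ZMod (p^n)}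
    (hzw : ZMod.castHom hd (ZMod p) z = ZMod.castHom hd (ZMod p) w) :
    (p:ZMod (p^n))^(n-1) * z = (p:ZMod (p^n))^(n-1) * w := by
  have hz : ZMod.castHom hd (ZMod p) z = ((z.val : ℕ) : ZMod p) := by
    rw [ZMod.castHom_apply, ← ZMod.natCast_val]
  have hw : ZMod.castHom hd (ZMod p) w = ((w.val : ℕ) : ZMod p) := by
    rw [ZMod.castHom_apply, ← ZMod.natCast_val]
  rw [hz, hw, ZMod.natCast_eq_natCast_iff] at hzw
  have key := pmul_congr p n hn (x := (z.val : ℤ)) (y := (w.val : ℤ))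
    (Int.ModEq.dvd (Int.natCast_modEq_iff.mpr hzw.symm))
  push_cast at key
  rwa [ZMod.natCast_val, ZMod.natCast_val, ZMod.cast_id, ZMod.cast_id] at key

lemma conj_mul_self (p n : ℕ) (hp : p.Prime) (u : ℕ) (hu : Nat.Coprime u p) :
    ∀ (χ : DirichletCharacter ℂ (p^n)),
    χ ((u : ZMod (p^n))) * (starRingEnd ℂ) (χ ((u : ZMod (p^n)))) = 1 := by
  intro χ
  have hunit : IsUnit ((u : ZMod (p^n))) :=
    (ZMod.isUnit_iff_coprime u (p^n)).mpr (hu.pow_right n)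
  obtain ⟨w, hw⟩ := hunit
  rw [← hw, Complex.mul_conj', DirichletCharacter.unit_norm_eq_one χ w]
  norm_num

lemma val_coprime_of_ne_zero (p : ℕ) (hp : p.Prime) (v : ZMod p) (hv : v ≠ 0) :
    Nat.Coprime v.val p := by
  haveI : NeZero p := ⟨hp.pos.ne'⟩
  have h1 : v.val ≠ 0 := fun h => hv (by rwa [← ZMod.val_eq_zero])
  have h2 : v.val < p := ZMod.val_lt v
  exact Nat.Coprime.symm (hp.coprime_iff_not_dvd.mpr
    (fun hd => absurd (Nat.le_of_dvd (Nat.pos_of_ne_zero h1) hd) (not_le.mpr h2)))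

lemma sum_unit_part (p n : ℕ) (hp : p.Prime) (hn : 2 ≤ n)
    (χ : DirichletCharacter ℂ (p^n)) (hχ : χ.IsPrimitive)
    (h' : ℤ) (hh' : ¬ ((p:ℤ) ∣ h')) :
    ∑ u ∈ Finset.range p, (if Nat.Coprime u p then
        χ ((u : ZMod (p^n)) + (p : ZMod (p^n))^(n-1) * (h' : ZMod (p^n)))
          * (starRingEnd ℂ) (χ ((u : ZMod (p^n)))) else 0) = -1 := by
  haveI : NeZero p := ⟨hp.pos.ne'⟩
  haveI : Fact p.Prime := ⟨hp⟩
  haveI : NeZero (p^n) := ⟨pow_ne_zero _ hp.pos.ne'⟩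
  have hd : p ∣ p^n := dvd_pow_self p (by omega)
  set c : ZMod (p^n) := (p : ZMod (p^n))^(n-1) with hc
  set ψ : ZMod p → ℂ := fun w => χ (1 + c * ((w.val : ℕ) : ZMod (p^n))) with hψ
  set h₀ : ZMod p := ((h' : ℤ) : ZMod p) with hh0
  have hh0ne : h₀ ≠ 0 := by
    rw [hh0, Ne, ZMod.intCast_zmod_eq_zero_iff_dvd]
    exact hh'
  rw [sum_range_zmod]
  have hstep : ∀ v : ZMod p,
      (if Nat.Coprime v.val p then
        χ ((v.val : ZMod (p^n)) + c * (h' : ZMod (p^n)))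
          * (starRingEnd ℂ) (χ ((v.val : ZMod (p^n)))) else 0)
      = (if v ≠ 0 then ψ (h₀ * v⁻¹) else 0) := by
    intro v
    by_cases hv : v = 0
    · subst hv
      have h1 : ¬ Nat.Coprime (0 : ZMod p).val p := by
        simp [ZMod.val_zero, Nat.coprime_zero_left, hp.one_lt.ne']
      rw [if_neg h1, if_neg (by simp)]
    · have hcop : Nat.Coprime v.val p := val_coprime_of_ne_zero p hp v hv
      rw [if_pos hcop, if_pos hv]
      set x : ZMod (p^n) := ((v.val : ℕ) : ZMod (p^n)) with hx
      have hxu : IsUnit x := (ZMod.isUnit_iff_coprime v.val (p^n)).mpr (hcop.pow_right n)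
      obtain ⟨ux, hux⟩ := hxu
      set y : ZMod (p^n) := ((ux⁻¹ : (ZMod (p^n))ˣ) : ZMod (p^n)) with hy
      have hxy : x * y = 1 := by rw [← hux, hy]; exact_mod_cast ux.mul_inv
      -- conj (χ x) = χ y
      have hconj : (starRingEnd ℂ) (χ x) = χ y := by
        have h1 : χ x * (starRingEnd ℂ) (χ x) = 1 := conj_mul_self p n hp v.val hcop χ
        have h2 : χ y * χ x = 1 := by rw [← map_mul, mul_comm y x, hxy, map_one]
        have hχx : χ x ≠ 0 := by
          intro h0; rw [h0, mul_zero] at h2; exact one_ne_zero h2.symm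
        linear_combination (χ y) * h1 - ((starRingEnd ℂ) (χ x)) * h2
      -- main rewrite
      rw [hconj, ← map_mul]
      have hfac : (x + c * (h' : ZMod (p^n))) * y = 1 + c * ((h' : ZMod (p^n)) * y) := by
        rw [add_mul, hxy]; ring
      rw [hfac]
      -- now identify c * (h' * y) with c * ((h₀ * v⁻¹).val)
      have hkey : c * ((h' : ZMod (p^n)) * y) = c * (((h₀ * v⁻¹).val : ℕ) : ZMod (p^n)) := by
        rw [hc]
        apply pmul_congr' p n (by omega) hd
        have hφx : ZMod.castHom hd (ZMod p) x = v := by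
          rw [hx, map_natCast, ZMod.natCast_val, ZMod.cast_id]
        have hφy : ZMod.castHom hd (ZMod p) y = v⁻¹ := by
          have := congrArg (ZMod.castHom hd (ZMod p)) hxy
          rw [map_mul, map_one, hφx] at this
          exact eq_inv_of_mul_eq_one_right this
        rw [map_mul, map_intCast, hφy, map_natCast, ZMod.natCast_val, ZMod.cast_id]
      rw [hkey]
  rw [Finset.sum_congr rfl (fun v _ => hstep v)]
  -- reindex by the involution e : v ↦ h₀ * v⁻¹
  have hinv : ∀ v : ZMod p, h₀ * (h₀ * v⁻¹)⁻¹ = v := by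
    intro v
    by_cases hv : v = 0
    · subst hv; simp
    · rw [mul_inv_rev, inv_inv, mul_comm v h₀⁻¹, ← mul_assoc, mul_inv_cancel₀ hh0ne, one_mul]
  have hne : ∀ v : ZMod p, v ≠ 0 → h₀ * v⁻¹ ≠ 0 := by
    intro v hv
    exact mul_ne_zero hh0ne (inv_ne_zero hv)
  have hre : ∑ v : ZMod p, (if v ≠ 0 then ψ (h₀ * v⁻¹) else 0)
      = ∑ w : ZMod p, (if w ≠ 0 then ψ w else 0) := by
    refine Finset.sum_nbij' (fun v => h₀ * v⁻¹) (fun w => h₀ * w⁻¹)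
      (fun _ _ => Finset.mem_univ _) (fun _ _ => Finset.mem_univ _)
      (fun v _ => hinv v) (fun w _ => hinv w) ?_
    intro v _
    by_cases hv : v = 0
    · subst hv; simp
    · rw [if_pos hv, if_pos (hne v hv)]
  rw [hre]
  have hsplit : ∀ w : ZMod p, (if w ≠ 0 then ψ w else 0) = ψ w - (if w = 0 then ψ w else 0) := by
    intro w; by_cases hw : w = 0 <;> simp [hw]
  simp_rw [hsplit]
  rw [Finset.sum_sub_distrib]
  have h1 : ∑ w : ZMod p, ψ w = 0 := by
    rw [hψ]; exact sum_psi p n hp hn χ hχ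
  have h2 : ∑ w : ZMod p, (if w = 0 then ψ w else 0) = ψ 0 :=
    Finset.sum_ite_eq' Finset.univ 0 ψ |>.trans (by simp)
  rw [h1, h2, hψ]
  simp [ZMod.val_zero]

lemma coprime_of_lt (p : ℕ) (hp : p.Prime) (u : ℕ) (hu0 : u ≠ 0) (hu : u < p) :
    Nat.Coprime u p :=
  Nat.Coprime.symm (hp.coprime_iff_not_dvd.mpr
    (fun hd => absurd (Nat.le_of_dvd (Nat.pos_of_ne_zero hu0) hd) (not_le.mpr hu)))

lemma final_arith (p s : ℕ) (hp : p.Prime) (S : ℂ)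
    (hS : S = -((p:ℂ)^(s-1)) ) (hs : 1 ≤ s) :
    ((Real.sqrt (p ^ s) : ℂ))⁻¹ * S = -(Real.sqrt (p ^ s) : ℂ) / (p : ℂ) := by
  have hppos : (0:ℝ) < (p:ℝ)^s := by
    have := hp.pos
    positivity
  have hR : (0:ℝ) < Real.sqrt (p ^ s) := Real.sqrt_pos.mpr (by exact_mod_cast hppos)
  have hRne : ((Real.sqrt (p ^ s) : ℝ) : ℂ) ≠ 0 := by exact_mod_cast hR.ne'
  have hpne : (p:ℂ) ≠ 0 := Nat.cast_ne_zero.mpr hp.pos.ne'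
  have hR2 : ((Real.sqrt (p ^ s) : ℝ) : ℂ) * ((Real.sqrt (p ^ s) : ℝ) : ℂ) = (p:ℂ)^s := by
    rw [← Complex.ofReal_mul, Real.mul_self_sqrt (by positivity)]
    push_cast; ring
  have hps : (p:ℂ)^s = (p:ℂ)^(s-1) * p := by
    rw [← pow_succ]; congr 1; omega
  rw [hS]
  field_simp
  linear_combination hps + hR2

lemma chi_shift (p n : ℕ) (hp : p.Prime) (hn : 2 ≤ n) (χ : DirichletCharacter ℂ (p^n))
    (h' : ℤ) (r : ℕ) (hr : Nat.Coprime r p) :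
    χ (((r + p : ℕ) : ZMod (p^n)) + (p:ZMod (p^n))^(n-1) * (h' : ZMod (p^n)))
      * (starRingEnd ℂ) (χ (((r+p:ℕ) : ZMod (p^n))))
    = χ ((r : ZMod (p^n)) + (p:ZMod (p^n))^(n-1) * (h' : ZMod (p^n)))
      * (starRingEnd ℂ) (χ ((r : ZMod (p^n)))) := by
  set c : ZMod (p^n) := (p:ZMod (p^n))^(n-1) with hc
  set a : ZMod (p^n) := (r : ZMod (p^n)) with ha
  have hb : ((r + p : ℕ) : ZMod (p^n)) = a + (p : ZMod (p^n)) := by push_cast; ring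
  set b : ZMod (p^n) := ((r + p : ℕ) : ZMod (p^n)) with hbb
  have hcp : c * (p : ZMod (p^n)) = 0 := by
    rw [hc, ← pow_succ]
    have h1 : n - 1 + 1 = n := by omega
    rw [h1]
    have : ((p^n : ℕ) : ZMod (p^n)) = 0 := ZMod.natCast_self _
    push_cast at this; exact this
  have key : (a + c * (h' : ZMod (p^n))) * b = (b + c * (h' : ZMod (p^n))) * a := by
    rw [hb]
    linear_combination ((h' : ZMod (p^n))) * hcp
  have hkey2 : χ (a + c * (h' : ZMod (p^n))) * χ b = χ (b + c * (h' : ZMod (p^n))) * χ a := by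
    rw [← map_mul, ← map_mul, key]
  have hca : χ a * (starRingEnd ℂ) (χ a) = 1 := conj_mul_self p n hp r hr χ
  have hcb : χ b * (starRingEnd ℂ) (χ b) = 1 := by
    have : Nat.Coprime (r + p) p := Nat.coprime_add_self_left.mpr hr
    exact conj_mul_self p n hp (r + p) this χ
  linear_combination (-((starRingEnd ℂ) (χ a) * (starRingEnd ℂ) (χ b))) * hkey2
    - (χ (b + c * (h' : ZMod (p^n))) * (starRingEnd ℂ) (χ b)) * hca
    + (χ (a + c * (h' : ZMod (p^n))) * (starRingEnd ℂ) (χ a)) * hcb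

/-- Third case of formula (4.1): if the valuations η_j, η_h (with respect to q̃ = p^s,
i.e. (j,q̃) = p^{η_j}, (h,q̃) = p^{η_h}) satisfy η_j + η_h = 2s - 1, then
K_χ(j,h;q̃) = -q̃^{1/2}/p. -/
theorem Kchi_ramanujan_case
    (p n : ℕ) (hp : p.Prime) (hodd : Odd p)
    (s : ℕ) (hs1 : 1 ≤ s) (hsn : s < n)
    (χ : DirichletCharacter ℂ (p ^ n)) (hχ : χ.IsPrimitive)
    (j h : ℤ) (ηj ηh : ℕ)
    (hj : Int.gcd j ((p : ℤ) ^ s) = p ^ ηj)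
    (hh : Int.gcd h ((p : ℤ) ^ s) = p ^ ηh)
    (hsum : ηj + ηh = 2 * s - 1) :
    Kchi p n χ j h s = -(Real.sqrt (p ^ s) : ℂ) / (p : ℂ) := by
  haveI : NeZero p := ⟨hp.pos.ne'⟩
  have hn2 : 2 ≤ n := by omega
  have hpC : (p:ℂ) ≠ 0 := Nat.cast_ne_zero.mpr hp.pos.ne'
  have hpsC : (p:ℂ)^s = (p:ℂ)^(s-1) * (p:ℂ) := by rw [← pow_succ]; congr 1; omega
  have hpn0 : (p : ZMod (p^n))^n = 0 := by
    have := ZMod.natCast_self (p^n)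
    push_cast at this; exact this
  have hjle : ηj ≤ s := by
    have h1 : ((p ^ ηj : ℕ) : ℤ) ∣ (p:ℤ)^s := by rw [← hj]; exact Int.gcd_dvd_right _ _
    have h2 : (p:ℕ)^ηj ∣ p^s := by exact_mod_cast h1
    exact (Nat.pow_dvd_pow_iff_le_right hp.one_lt).mp h2
  have hhle : ηh ≤ s := by
    have h1 : ((p ^ ηh : ℕ) : ℤ) ∣ (p:ℤ)^s := by rw [← hh]; exact Int.gcd_dvd_right _ _
    have h2 : (p:ℕ)^ηh ∣ p^s := by exact_mod_cast h1
    exact (Nat.pow_dvd_pow_iff_le_right hp.one_lt).mp h2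
  have hps : p ^ s = p ^ (s-1) * p := by rw [← pow_succ]; congr 1; omega
  have hrange : Finset.range (p^s) = Finset.range (p^(s-1) * p) := by rw [← hps]
  rcases (by omega : (ηj = s - 1 ∧ ηh = s) ∨ (ηj = s ∧ ηh = s - 1)) with ⟨hj1, hh1⟩ | ⟨hj1, hh1⟩
  · -- Case A : p^s ∣ h, j = p^(s-1) j' with p ∤ j'
    obtain ⟨k, hk⟩ : ((p^s : ℕ) : ℤ) ∣ h := by
      rw [show ((p^s : ℕ) : ℤ) = ((p^ηh : ℕ) : ℤ) by rw [hh1], ← hh]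
      exact Int.gcd_dvd_left _ _
    obtain ⟨j', hj'⟩ : ((p^(s-1) : ℕ) : ℤ) ∣ j := by
      rw [show ((p^(s-1) : ℕ) : ℤ) = ((p^ηj : ℕ) : ℤ) by rw [hj1], ← hj]
      exact Int.gcd_dvd_left _ _
    have hpj' : ¬ ((p:ℤ) ∣ j') := by
      intro hd
      obtain ⟨t, ht⟩ := hd
      have h1 : ((p^s : ℕ) : ℤ) ∣ j := by
        refine ⟨t, ?_⟩
        rw [hj', ht, hps]; push_cast; ring
      have h2 : ((p^s : ℕ) : ℤ) ∣ (p:ℤ)^s := by push_cast; exact dvd_rfl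
      have h3 := Int.dvd_gcd h1 h2
      rw [hj, hj1] at h3
      have h4 : (p:ℕ)^s ∣ p^(s-1) := by exact_mod_cast h3
      have := (Nat.pow_dvd_pow_iff_le_right hp.one_lt).mp h4
      omega
    have hb0 : (h : ZMod (p^n)) * (p:ZMod (p^n))^(n-s) = 0 := by
      rw [hk]; push_cast
      rw [show (p:ZMod (p^n))^s * (k:ZMod (p^n)) * (p:ZMod (p^n))^(n-s)
        = ((p:ZMod (p^n))^(s+(n-s))) * (k:ZMod (p^n)) by ring,
        show s + (n-s) = n by omega, hpn0, zero_mul]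
    have hsum1 : ∀ r : ℕ,
        (if Nat.Coprime r p then
          χ ((r : ZMod (p ^ n)) + (h : ZMod (p ^ n)) * (p : ZMod (p ^ n)) ^ (n - s)) *
            (starRingEnd ℂ) (χ (r : ZMod (p ^ n))) *
            Complex.exp (2 * Real.pi * Complex.I * (j : ℂ) * (r : ℂ) / ((p : ℂ) ^ s))
        else 0)
        = (if Nat.Coprime r p then
            Complex.exp (2 * Real.pi * Complex.I * (j' : ℂ) * (r : ℂ) / (p : ℂ)) else 0) := by
      intro r
      by_cases hco : Nat.Coprime r p
      · rw [if_pos hco, if_pos hco, hb0, add_zero, conj_mul_self p n hp r hco χ, one_mul]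
        congr 1
        push_cast [hj']
        rw [hpsC]
        field_simp
      · rw [if_neg hco, if_neg hco]
    rw [Kchi, Finset.sum_congr rfl (fun r _ => hsum1 r), hrange]
    rw [periodic_sum _ p (by
      intro r
      by_cases hco : Nat.Coprime r p
      · rw [if_pos (Nat.coprime_add_self_left.mpr hco), if_pos hco]
        have harg : 2 * Real.pi * Complex.I * (j' : ℂ) * ((r + p : ℕ) : ℂ) / (p : ℂ)
            = 2 * Real.pi * Complex.I * (j' : ℂ) * (r : ℂ) / (p : ℂ) + (j':ℂ) * (2 * Real.pi * Complex.I) := by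
          push_cast
          field_simp
        rw [harg, Complex.exp_add, Complex.exp_int_mul_two_pi_mul_I, mul_one]
      · rw [if_neg (fun hc => hco (Nat.coprime_add_self_left.mp hc)), if_neg hco]) (p^(s-1))]
    have hinner : ∑ u ∈ Finset.range p,
        (if Nat.Coprime u p then
          Complex.exp (2 * Real.pi * Complex.I * (j' : ℂ) * (u : ℂ) / (p : ℂ)) else 0) = -1 := by
      have hsplit : ∀ u ∈ Finset.range p,
          (if Nat.Coprime u p then
            Complex.exp (2 * Real.pi * Complex.I * (j' : ℂ) * (u : ℂ) / (p : ℂ)) else 0)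
          = Complex.exp (2 * Real.pi * Complex.I * (j' : ℂ) * (u : ℂ) / (p : ℂ))
            - (if u = 0 then 1 else 0) := by
        intro u hu
        by_cases h0 : u = 0
        · subst h0
          rw [if_neg (by simp [Nat.coprime_zero_left, hp.one_lt.ne']), if_pos rfl]
          norm_num
        · rw [if_pos (coprime_of_lt p hp u h0 (Finset.mem_range.mp hu)), if_neg h0]
          ring
      rw [Finset.sum_congr rfl hsplit, Finset.sum_sub_distrib, exp_sum_zero p hp j' hpj']
      rw [Finset.sum_ite_eq' (Finset.range p) 0 (fun _ => (1:ℂ))]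
      simp [hp.pos]
    rw [hinner]
    exact final_arith p s hp _ (by push_cast; ring) hs1
  · -- Case B : p^s ∣ j, h = p^(s-1) h' with p ∤ h'
    obtain ⟨m, hk⟩ : ((p^s : ℕ) : ℤ) ∣ j := by
      rw [show ((p^s : ℕ) : ℤ) = ((p^ηj : ℕ) : ℤ) by rw [hj1], ← hj]
      exact Int.gcd_dvd_left _ _
    obtain ⟨h', hh'⟩ : ((p^(s-1) : ℕ) : ℤ) ∣ h := by
      rw [show ((p^(s-1) : ℕ) : ℤ) = ((p^ηh : ℕ) : ℤ) by rw [hh1], ← hh]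
      exact Int.gcd_dvd_left _ _
    have hph' : ¬ ((p:ℤ) ∣ h') := by
      intro hd
      obtain ⟨t, ht⟩ := hd
      have h1 : ((p^s : ℕ) : ℤ) ∣ h := by
        refine ⟨t, ?_⟩
        rw [hh', ht, hps]; push_cast; ring
      have h2 : ((p^s : ℕ) : ℤ) ∣ (p:ℤ)^s := by push_cast; exact dvd_rfl
      have h3 := Int.dvd_gcd h1 h2
      rw [hh, hh1] at h3
      have h4 : (p:ℕ)^s ∣ p^(s-1) := by exact_mod_cast h3
      have := (Nat.pow_dvd_pow_iff_le_right hp.one_lt).mp h4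
      omega
    have hb1 : (h : ZMod (p^n)) * (p:ZMod (p^n))^(n-s) = (p:ZMod (p^n))^(n-1) * (h' : ZMod (p^n)) := by
      rw [hh']; push_cast
      rw [show (p:ZMod (p^n))^(s-1) * (h':ZMod (p^n)) * (p:ZMod (p^n))^(n-s)
        = ((p:ZMod (p^n))^((s-1)+(n-s))) * (h':ZMod (p^n)) by ring,
        show (s-1) + (n-s) = n-1 by omega]
    have hexp1 : ∀ r : ℕ,
        Complex.exp (2 * Real.pi * Complex.I * (j : ℂ) * (r : ℂ) / ((p : ℂ) ^ s)) = 1 := by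
      intro r
      have hpsne : (p:ℂ)^s ≠ 0 := pow_ne_zero _ hpC
      have harg : 2 * Real.pi * Complex.I * (j : ℂ) * (r : ℂ) / ((p : ℂ) ^ s)
          = ((m * r : ℤ) : ℂ) * (2 * Real.pi * Complex.I) := by
        push_cast [hk]
        field_simp
      rw [harg, Complex.exp_int_mul_two_pi_mul_I]
    have hsum1 : ∀ r : ℕ,
        (if Nat.Coprime r p then
          χ ((r : ZMod (p ^ n)) + (h : ZMod (p ^ n)) * (p : ZMod (p ^ n)) ^ (n - s)) *
            (starRingEnd ℂ) (χ (r : ZMod (p ^ n))) *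
            Complex.exp (2 * Real.pi * Complex.I * (j : ℂ) * (r : ℂ) / ((p : ℂ) ^ s))
        else 0)
        = (if Nat.Coprime r p then
            χ ((r : ZMod (p ^ n)) + (p : ZMod (p ^ n))^(n-1) * (h' : ZMod (p ^ n))) *
              (starRingEnd ℂ) (χ (r : ZMod (p ^ n))) else 0) := by
      intro r
      by_cases hco : Nat.Coprime r p
      · rw [if_pos hco, if_pos hco, hb1, hexp1, mul_one]
      · rw [if_neg hco, if_neg hco]
    rw [Kchi, Finset.sum_congr rfl (fun r _ => hsum1 r), hrange]
    rw [periodic_sum _ p (by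
      intro r
      by_cases hco : Nat.Coprime r p
      · rw [if_pos (Nat.coprime_add_self_left.mpr hco), if_pos hco]
        exact chi_shift p n hp hn2 χ h' r hco
      · rw [if_neg (fun hc => hco (Nat.coprime_add_self_left.mp hc)), if_neg hco]) (p^(s-1))]
    rw [sum_unit_part p n hp hn2 χ hχ h' hph']
    exact final_arith p s hp _ (by push_cast; ring) hs1
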